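/- arXiv:1606.00051 — 2 statements merged into one kernel-verified Lean document; each statement's English description precedes it below -/
import Mathlib

section
/- Let N be a positive integer and let S be a nonempty subset of ZMod N whose indicator function 1_S satisfies |S| · |supp 𝓕(1_S)| = N. Then S is a coset of an additive subgroup of ZMod N, i.e. there exist a : ZMod N and an additive subgroup H of ZMod N with S = a + H. (This is the 'furthermore' clause of Theorem 3.11 of the paper — an extremal bi-partial isometry which is a projection is a shift of a biprojection — specialized to L^∞(ℤ/Nℤ).) -/
open Complex Finset

/-- The unitary discrete Fourier transform on `ZMod N`. -/
noncomputable def dft (N : ℕ) [NeZero N] (f : ZMod N → ℂ) : ZMod N → ℂ :=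
  fun k => (((N : ℝ) ^ (-(1/2 : ℝ)) : ℝ) : ℂ) *
    ∑ x : ZMod N, f x *
      Complex.exp (-2 * Real.pi * Complex.I * (k.val : ℂ) * (x.val : ℂ) / (N : ℂ))

lemma dft_eq_zdft (N : ℕ) [NeZero N] (f : ZMod N → ℂ) (k : ZMod N) :
    dft N f k = (((N : ℝ) ^ (-(1/2 : ℝ)) : ℝ) : ℂ) * ZMod.dft f k := by
  unfold dft
  rw [ZMod.dft_apply]
  congr 1
  refine Finset.sum_congr rfl fun x _ => ?_
  rw [smul_eq_mul, mul_comm]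
  congr 1
  have h1 : (((-(x.val * k.val : ℤ)) : ℤ) : ZMod N) = -(x * k) := by
    push_cast
    rw [ZMod.natCast_val, ZMod.natCast_val, ZMod.cast_id, ZMod.cast_id]
  rw [← h1, ZMod.stdAddChar_coe]
  congr 1
  push_cast
  ring

lemma norm_stdAddChar {N : ℕ} [NeZero N] (a : ZMod N) :
    ‖(ZMod.stdAddChar a : ℂ)‖ = 1 := by
  rw [ZMod.stdAddChar_apply]
  exact Circle.norm_coe _

lemma conj_stdAddChar {N : ℕ} [NeZero N] (a : ZMod N) :
    (starRingEnd ℂ) (ZMod.stdAddChar a) = ZMod.stdAddChar (-a) := by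
  have h1 : (starRingEnd ℂ) (ZMod.stdAddChar a) * ZMod.stdAddChar a = 1 := by
    rw [mul_comm, Complex.mul_conj]
    norm_cast
    rw [Complex.normSq_eq_norm_sq, norm_stdAddChar]; norm_num
  have h2 : ZMod.stdAddChar (-a) * ZMod.stdAddChar a = 1 := by
    rw [← AddChar.map_add_eq_mul, neg_add_cancel, AddChar.map_zero_eq_one]
  have hne : (ZMod.stdAddChar a : ℂ) ≠ 0 := by
    intro h; rw [h] at h2; simp at h2
  exact mul_right_cancel₀ hne (h1.trans h2.symm)

lemma sum_stdAddChar_eq {N : ℕ} [NeZero N] (m : ZMod N) :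
    ∑ k : ZMod N, ZMod.stdAddChar (m * k) = if m = 0 then (N : ℂ) else 0 := by
  split_ifs with h
  · simp [h]
  · have := AddChar.sum_eq_zero_of_ne_one (ZMod.isPrimitive_stdAddChar N h)
    simpa [AddChar.mulShift_apply] using this

lemma parseval {N : ℕ} [NeZero N] (f : ZMod N → ℂ) :
    ∑ k : ZMod N, ZMod.dft f k * (starRingEnd ℂ) (ZMod.dft f k)
      = N * ∑ x : ZMod N, f x * (starRingEnd ℂ) (f x) := by
  have key : ∀ k : ZMod N, ZMod.dft f k * (starRingEnd ℂ) (ZMod.dft f k)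
      = ∑ j : ZMod N, ∑ j' : ZMod N,
          (f j * (starRingEnd ℂ) (f j')) * ZMod.stdAddChar ((j' - j) * k) := by
    intro k
    rw [ZMod.dft_apply, map_sum, Finset.sum_mul_sum]
    refine Finset.sum_congr rfl fun j _ => Finset.sum_congr rfl fun j' _ => ?_
    rw [smul_eq_mul, smul_eq_mul, map_mul, conj_stdAddChar, neg_neg]
    have h : ZMod.stdAddChar (-(j*k)) * ZMod.stdAddChar (j'*k)
        = ZMod.stdAddChar ((j' - j) * k) := by
      rw [← AddChar.map_add_eq_mul]
      congr 1
      ring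
    calc ZMod.stdAddChar (-(j * k)) * f j * (ZMod.stdAddChar (j' * k) * (starRingEnd ℂ) (f j'))
        = (f j * (starRingEnd ℂ) (f j')) *
          (ZMod.stdAddChar (-(j*k)) * ZMod.stdAddChar (j'*k)) := by ring
      _ = _ := by rw [h]
  calc ∑ k : ZMod N, ZMod.dft f k * (starRingEnd ℂ) (ZMod.dft f k)
      = ∑ k : ZMod N, ∑ j : ZMod N, ∑ j' : ZMod N,
          (f j * (starRingEnd ℂ) (f j')) * ZMod.stdAddChar ((j' - j) * k) :=
        Finset.sum_congr rfl fun k _ => key k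
    _ = ∑ j : ZMod N, ∑ j' : ZMod N,
          (f j * (starRingEnd ℂ) (f j')) * ∑ k : ZMod N, ZMod.stdAddChar ((j' - j) * k) := by
        rw [Finset.sum_comm]
        refine Finset.sum_congr rfl fun j _ => ?_
        rw [Finset.sum_comm]
        refine Finset.sum_congr rfl fun j' _ => ?_
        rw [Finset.mul_sum]
    _ = N * ∑ x : ZMod N, f x * (starRingEnd ℂ) (f x) := by
        simp only [sum_stdAddChar_eq, sub_eq_zero, mul_ite, mul_zero]
        rw [Finset.mul_sum]
        refine Finset.sum_congr rfl fun j _ => ?_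
        rw [Finset.sum_ite_eq' Finset.univ j (fun j' => f j * (starRingEnd ℂ) (f j') * N)]
        simp [mul_comm]

lemma unimodular_sum_eq {α : Type*} [DecidableEq α] (s : Finset α) (u : α → ℂ)
    (hu : ∀ x ∈ s, ‖u x‖ = 1)
    (h : ‖∑ x ∈ s, u x‖ = s.card) :
    ∀ x ∈ s, ∀ y ∈ s, u x = u y := by
  set z := ∑ x ∈ s, u x with hz
  have hzz : z * (starRingEnd ℂ) z = ∑ p ∈ s ×ˢ s, u p.1 * (starRingEnd ℂ) (u p.2) := by
    rw [Finset.sum_product]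
    rw [hz, map_sum, Finset.sum_mul_sum]
  have hre : ∑ p ∈ s ×ˢ s, (u p.1 * (starRingEnd ℂ) (u p.2)).re = (s.card : ℝ)^2 := by
    have : (z * (starRingEnd ℂ) z).re = (s.card : ℝ)^2 := by
      rw [Complex.mul_conj]
      norm_cast
      rw [Complex.normSq_eq_norm_sq, h]; push_cast; ring
    rw [← this, hzz, Complex.re_sum]
  have hle : ∀ p ∈ s ×ˢ s, (u p.1 * (starRingEnd ℂ) (u p.2)).re ≤ 1 := by
    intro p hp
    rw [Finset.mem_product] at hp
    calc (u p.1 * (starRingEnd ℂ) (u p.2)).re ≤ ‖u p.1 * (starRingEnd ℂ) (u p.2)‖ :=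
          Complex.re_le_norm _
      _ = 1 := by rw [norm_mul, Complex.norm_conj, hu _ hp.1, hu _ hp.2, mul_one]
  have hzero : ∑ p ∈ s ×ˢ s, (1 - (u p.1 * (starRingEnd ℂ) (u p.2)).re) = 0 := by
    rw [Finset.sum_sub_distrib, hre, Finset.sum_const, Finset.card_product]
    simp [pow_two]
  have heach : ∀ p ∈ s ×ˢ s, (1 : ℝ) - (u p.1 * (starRingEnd ℂ) (u p.2)).re = 0 :=
    (Finset.sum_eq_zero_iff_of_nonneg (fun q hq => by linarith [hle q hq])).mp hzero
  intro x hx y hy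
  have hp : (x, y) ∈ s ×ˢ s := Finset.mem_product.mpr ⟨hx, hy⟩
  have h1 : (u x * (starRingEnd ℂ) (u y)).re = 1 := by linarith [heach _ hp]
  have habs : ‖u x * (starRingEnd ℂ) (u y)‖ = 1 := by
    rw [norm_mul, Complex.norm_conj, hu _ hx, hu _ hy, mul_one]
  have him : (u x * (starRingEnd ℂ) (u y)).im = 0 := by
    have := Complex.sq_norm (u x * (starRingEnd ℂ) (u y))
    rw [habs, Complex.normSq_apply, h1] at this
    nlinarith
  have hone : u x * (starRingEnd ℂ) (u y) = 1 := by
    apply Complex.ext <;> simp [h1, him]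
  have huy : (starRingEnd ℂ) (u y) * u y = 1 := by
    rw [mul_comm, Complex.mul_conj]
    norm_cast
    rw [Complex.normSq_eq_norm_sq, hu _ hy]; norm_num
  calc u x = u x * ((starRingEnd ℂ) (u y) * u y) := by rw [huy, mul_one]
    _ = (u x * (starRingEnd ℂ) (u y)) * u y := by ring
    _ = u y := by rw [hone, one_mul]

lemma ann_card_le {N : ℕ} [NeZero N] (T : Finset (ZMod N)) (H : AddSubgroup (ZMod N))
    (hH : ∀ h ∈ H, ∀ k ∈ T, k * h = 0) :
    Nat.card H * T.card ≤ N := by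
  classical
  set G := AddSubgroup.closure (T : Set (ZMod N)) with hG
  obtain ⟨g, hgen⟩ := IsAddCyclic.exists_generator (α := G)
  set t : ZMod N := (g : ZMod N) with ht
  set φ : ZMod N →+ ZMod N := AddMonoidHom.mulRight t with hφ
  have hTr : (T : Set (ZMod N)) ⊆ (φ.range : Set (ZMod N)) := by
    intro k hk
    have hkG : k ∈ G := AddSubgroup.subset_closure hk
    obtain ⟨n, hn⟩ := hgen ⟨k, hkG⟩
    refine ⟨((n : ℤ) : ZMod N), ?_⟩
    have : (n • g : G) = ⟨k, hkG⟩ := hn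
    have h2 : n • t = k := by
      have := congrArg (Subtype.val) this
      simpa using this
    rw [hφ]
    simp only [AddMonoidHom.coe_mulRight]
    rw [← h2, zsmul_eq_mul]
  have hHk : H ≤ φ.ker := by
    intro h hh
    have hA : G ≤ (AddMonoidHom.mulRight h).ker := by
      rw [hG, AddSubgroup.closure_le]
      intro k hk
      simpa [AddMonoidHom.mem_ker] using hH h hh k hk
    have := hA g.2
    simp only [AddMonoidHom.mem_ker, AddMonoidHom.coe_mulRight] at this ⊢
    rw [hφ]
    simp only [AddMonoidHom.coe_mulRight]
    rw [mul_comm] at this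
    exact this
  have hcard : Nat.card (ZMod N) = Nat.card φ.range * Nat.card φ.ker := by
    rw [AddSubgroup.card_eq_card_quotient_mul_card_addSubgroup φ.ker]
    congr 1
    exact Nat.card_congr (QuotientAddGroup.quotientKerEquivRange φ).toEquiv
  have h1 : Nat.card H ≤ Nat.card φ.ker := AddSubgroup.card_le_of_le hHk
  have h2 : T.card ≤ Nat.card φ.range := by
    rw [show Nat.card φ.range = ((φ.range : Set (ZMod N))).ncard from
      (Nat.card_coe_set_eq _).symm, ← Set.ncard_coe_finset]
    exact Set.ncard_le_ncard hTr (Set.toFinite _)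
  calc Nat.card H * T.card ≤ Nat.card φ.ker * Nat.card φ.range :=
        Nat.mul_le_mul h1 h2
    _ = N := by rw [mul_comm, ← hcard, Nat.card_zmod]

/-- If the indicator function of a nonempty set S saturates the Donoho–Stark
uncertainty principle, then S is a coset of a subgroup of ZMod N. -/
theorem projection_minimizer_is_coset (N : ℕ) [NeZero N] (S : Set (ZMod N))
    (hS : S.Nonempty)
    (hmin : S.ncard *
      (Function.support (dft N (Set.indicator S (fun _ => (1 : ℂ))))).ncard = N) :
    ∃ (a : ZMod N) (H : AddSubgroup (ZMod N)), S = {x : ZMod N | x - a ∈ H} := by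
  classical
  obtain ⟨a, haS⟩ := hS
  set f : ZMod N → ℂ := Set.indicator S (fun _ => (1:ℂ)) with hf
  set g : ZMod N → ℂ := ZMod.dft f with hg
  set sF : Finset (ZMod N) := Set.Finite.toFinset S.toFinite with hsFdef
  have hmem : ∀ x, x ∈ sF ↔ x ∈ S := fun x => Set.Finite.mem_toFinset _
  have hncard : S.ncard = sF.card := Set.ncard_eq_toFinset_card S S.toFinite
  set T : Finset (ZMod N) := Finset.univ.filter (fun k => g k ≠ 0) with hTdef
  have hc0 : (((N : ℝ) ^ (-(1/2 : ℝ)) : ℝ) : ℂ) ≠ 0 := by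
    have : (0:ℝ) < (N : ℝ) ^ (-(1/2 : ℝ)) :=
      Real.rpow_pos_of_pos (by exact_mod_cast (NeZero.pos N)) _
    exact_mod_cast this.ne'
  have hsupp : Function.support (dft N f) = ↑T := by
    ext k
    simp only [Function.mem_support, dft_eq_zdft, hTdef, Finset.coe_filter,
      Set.mem_setOf_eq, Finset.mem_univ, true_and, mul_ne_zero_iff, ← hg]
    exact ⟨fun h => h.2, fun h => ⟨hc0, h⟩⟩
  have hT : (Function.support (dft N f)).ncard = T.card := by
    rw [hsupp, Set.ncard_coe_finset]
  have hmin' : sF.card * T.card = N := by rw [← hncard, ← hT]; exact hmin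
  have hgk : ∀ k, g k = ∑ j ∈ sF, ZMod.stdAddChar (-(j*k)) := by
    intro k
    rw [hg, ZMod.dft_apply]
    rw [← Finset.sum_subset (Finset.subset_univ sF) (fun j _ hj => by
      simp [hf, Set.indicator_of_notMem (fun hxx => hj ((hmem j).mpr hxx))])]
    refine Finset.sum_congr rfl fun j hj => ?_
    simp [hf, Set.indicator_of_mem ((hmem j).mp hj)]
  have habs_le : ∀ k, ‖g k‖ ≤ (sF.card : ℝ) := by
    intro k
    rw [hgk]
    calc ‖∑ j ∈ sF, (ZMod.stdAddChar (-(j*k)) : ℂ)‖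
        ≤ ∑ j ∈ sF, ‖(ZMod.stdAddChar (-(j*k)) : ℂ)‖ :=
          norm_sum_le _ _
      _ = (sF.card : ℝ) := by simp [norm_stdAddChar]
  have hsum1 : ∑ x : ZMod N, f x * (starRingEnd ℂ) (f x) = (sF.card : ℂ) := by
    rw [← Finset.sum_subset (Finset.subset_univ sF) (fun j _ hj => by
      simp [hf, Set.indicator_of_notMem (fun hxx => hj ((hmem j).mpr hxx))])]
    have heq : ∀ j ∈ sF, f j * (starRingEnd ℂ) (f j) = 1 := fun j hj => by
      simp [hf, Set.indicator_of_mem ((hmem j).mp hj)]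
    rw [Finset.sum_congr rfl heq, Finset.sum_const, nsmul_eq_mul, mul_one]
  have hpars : ∑ k : ZMod N, Complex.normSq (g k) = (N : ℝ) * sF.card := by
    have hp := parseval (N := N) f
    rw [hsum1, ← hg] at hp
    have h1 : ((∑ k : ZMod N, Complex.normSq (g k) : ℝ) : ℂ)
        = ∑ k : ZMod N, g k * (starRingEnd ℂ) (g k) := by
      push_cast
      exact Finset.sum_congr rfl fun k _ => (Complex.mul_conj (g k)).symm
    have := h1.trans hp
    exact_mod_cast this
  have hsum_T : ∑ k ∈ T, Complex.normSq (g k) = (N:ℝ) * sF.card := by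
    rw [← hpars]
    exact Finset.sum_subset (Finset.subset_univ T) (fun k _ hk => by
      have hk0 : g k = 0 := by
        by_contra hcc
        exact hk (Finset.mem_filter.mpr ⟨Finset.mem_univ k, hcc⟩)
      simp [hk0])
  have hkey : ∀ k ∈ T, Complex.normSq (g k) = (sF.card:ℝ)^2 := by
    have hN : (N:ℝ) = (sF.card : ℝ) * T.card := by exact_mod_cast hmin'.symm
    have hzero : ∑ k ∈ T, ((sF.card:ℝ)^2 - Complex.normSq (g k)) = 0 := by
      rw [Finset.sum_sub_distrib, hsum_T, Finset.sum_const, hN]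
      ring
    have hnn : ∀ k ∈ T, 0 ≤ (sF.card:ℝ)^2 - Complex.normSq (g k) := by
      intro k _
      have h1 := habs_le k
      have h2 : Complex.normSq (g k) = ‖g k‖^2 := (Complex.sq_norm _).symm
      nlinarith [norm_nonneg (g k)]
    intro k hk
    have := (Finset.sum_eq_zero_iff_of_nonneg hnn).mp hzero k hk
    linarith
  have hconst : ∀ k ∈ T, ∀ x ∈ S, k * (x - a) = 0 := by
    intro k hk x hxS
    have habs : ‖g k‖ = sF.card := by
      have h1 := hkey k hk
      rw [Complex.norm_def, h1, Real.sqrt_sq (by positivity)]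
    have hu := unimodular_sum_eq sF (fun j => ZMod.stdAddChar (-(j*k)))
      (fun j _ => norm_stdAddChar _) (by rw [← hgk]; exact habs)
    have hx : x ∈ sF := (hmem x).mpr hxS
    have ha' : a ∈ sF := (hmem a).mpr haS
    have heq0 := hu x hx a ha'
    have heq : -(x*k) = -(a*k) := ZMod.injective_stdAddChar heq0
    have h3 : x * k = a * k := neg_inj.mp heq
    have h4 : (x - a) * k = 0 := by rw [sub_mul, h3, sub_self]
    rw [mul_comm] at h4
    exact h4
  set H : AddSubgroup (ZMod N) := ⨅ k ∈ T, (AddMonoidHom.mulLeft k).ker with hHdef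
  have hmemH : ∀ x : ZMod N, x ∈ H ↔ ∀ k ∈ T, k * x = 0 := by
    intro x
    simp [hHdef, AddSubgroup.mem_iInf, AddMonoidHom.mem_ker]
  refine ⟨a, H, ?_⟩
  have hsub : S ⊆ {x | x - a ∈ H} := fun x hx => (hmemH _).mpr fun k hk => hconst k hk x hx
  have hHle : Nat.card H * T.card ≤ N :=
    ann_card_le T H (fun h hh k hk => (hmemH h).mp hh k hk)
  have hTpos : 0 < T.card := by
    rcases Nat.eq_zero_or_pos T.card with h | h
    · rw [h, mul_zero] at hmin'
      exact absurd hmin'.symm (NeZero.ne N)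
    · exact h
  have hcosetcard : {x : ZMod N | x - a ∈ H}.ncard = Nat.card H := by
    have himg : {x : ZMod N | x - a ∈ H} = (fun h => a + h) '' (H : Set (ZMod N)) := by
      ext x
      simp only [Set.mem_setOf_eq, Set.mem_image, SetLike.mem_coe]
      constructor
      · intro hx; exact ⟨x - a, hx, by ring⟩
      · rintro ⟨h, hh, rfl⟩; simpa using hh
    rw [himg, Set.ncard_image_of_injective _ (add_right_injective a),
      ← Nat.card_coe_set_eq]
    rfl
  have hle2 : {x : ZMod N | x - a ∈ H}.ncard ≤ S.ncard := by
    rw [hcosetcard, hncard]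
    exact Nat.le_of_mul_le_mul_right (by rw [hmin']; exact hHle) hTpos
  exact Set.eq_of_subset_of_ncard_le hsub hle2 (Set.toFinite _)
end

section
/- Let N be a positive integer, H an additive subgroup of ZMod N, a, b : ZMod N, and c ∈ ℂ nonzero. Let w : ZMod N → ℂ be given by w(x) = c · exp(2πi·b̄·x̄/N) for x ∈ a + H and w(x) = 0 otherwise. Suppose f : ZMod N → ℂ satisfies |f(x)| ≤ C·|w(x)| for all x and |(𝓕 f)(k)| ≤ C'·|(𝓕 w)(k)| for all k, for some constants C, C' > 0. Then there exists λ ∈ ℂ with f = λ · w. (This is Hardy's uncertainty principle, Theorem 3.16 of the paper — if w is a bi-shift of a biprojection, |x| ≤ C|w| and |𝓕(x)| ≤ C'|𝓕(w)| imply x is a scalar multiple of w — specialized to L^∞(ℤ/Nℤ).) -/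
open Complex Finset

noncomputable def psiZ (N : ℕ) (m : ℤ) : ℂ := Complex.exp (2 * Real.pi * Complex.I * (m : ℂ) / N)
noncomputable def psi (N : ℕ) (u : ZMod N) : ℂ := psiZ N (u.val : ℤ)

lemma psiZ_add (N : ℕ) (m m' : ℤ) : psiZ N (m + m') = psiZ N m * psiZ N m' := by
  rw [psiZ, psiZ, psiZ, ← Complex.exp_add]
  congr 1
  push_cast
  ring

lemma psiZ_ne_zero (N : ℕ) (m : ℤ) : psiZ N m ≠ 0 := Complex.exp_ne_zero _

lemma psiZ_mul_self (N : ℕ) [NeZero N] (q : ℤ) : psiZ N ((N : ℤ) * q) = 1 := by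
  rw [psiZ]
  have hN : (N : ℂ) ≠ 0 := Nat.cast_ne_zero.mpr (NeZero.ne N)
  have : 2 * Real.pi * Complex.I * (((N : ℤ) * q : ℤ) : ℂ) / N = q * (2 * Real.pi * Complex.I) := by
    push_cast
    field_simp
  rw [this, Complex.exp_int_mul_two_pi_mul_I]

lemma psi_intCast (N : ℕ) [NeZero N] (m : ℤ) : psi N ((m : ZMod N)) = psiZ N m := by
  rw [psi, ZMod.val_intCast]
  conv_rhs => rw [show m = (N : ℤ) * (m / N) + m % N from (Int.mul_ediv_add_emod m N).symm]
  rw [psiZ_add, psiZ_mul_self, one_mul]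

lemma psi_add (N : ℕ) [NeZero N] (u v : ZMod N) : psi N (u + v) = psi N u * psi N v := by
  have h : u + v = (((u.val : ℤ) + (v.val : ℤ) : ℤ) : ZMod N) := by
    push_cast
    simp [ZMod.natCast_val, ZMod.cast_id]
  rw [h, psi_intCast, psiZ_add, psi, psi]

lemma psi_zero (N : ℕ) [NeZero N] : psi N 0 = 1 := by
  have := psi_intCast N 0
  simpa [psiZ] using this

lemma psi_ne_zero (N : ℕ) (u : ZMod N) : psi N u ≠ 0 := Complex.exp_ne_zero _

lemma psi_eq_one_iff (N : ℕ) [NeZero N] (u : ZMod N) : psi N u = 1 ↔ u = 0 := by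
  constructor
  · intro h
    by_contra hu
    have hval : 0 < u.val := Nat.pos_of_ne_zero (fun h0 => hu (by rwa [← ZMod.val_eq_zero]))
    have hlt := ZMod.val_lt u
    rw [psi, psiZ, Complex.exp_eq_one_iff] at h
    obtain ⟨n, hn⟩ := h
    have hN : (N : ℂ) ≠ 0 := Nat.cast_ne_zero.mpr (NeZero.ne N)
    have hI : (2 : ℂ) * Real.pi * Complex.I ≠ 0 := by
      simp [Real.pi_ne_zero, Complex.I_ne_zero]
    have hc : ((u.val : ℕ) : ℂ) = (n : ℂ) * N := by
      have h1 : (2:ℂ) * Real.pi * Complex.I * ((u.val : ℕ) : ℂ) =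
          (2:ℂ) * Real.pi * Complex.I * ((n : ℂ) * N) := by
        field_simp at hn
        push_cast at hn
        linear_combination (2 * (Real.pi : ℂ) * Complex.I) * hn
      exact mul_left_cancel₀ hI h1
    have h2 : (u.val : ℤ) = n * N := by exact_mod_cast hc
    rcases le_or_gt n 0 with h3 | h3
    · have : n * (N:ℤ) ≤ 0 := mul_nonpos_iff.mpr (Or.inr ⟨h3, by positivity⟩)
      omega
    · have : (N:ℤ) ≤ n * N := le_mul_of_one_le_left (by positivity) h3
      omega
  · intro h; subst h; exact psi_zero N

lemma val_cast' (N : ℕ) [NeZero N] (u : ZMod N) : ((u.val : ℕ) : ZMod N) = u := by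
  rw [ZMod.natCast_val, ZMod.cast_id]

lemma psi_val_val (N : ℕ) [NeZero N] (u v : ZMod N) :
    Complex.exp (2 * Real.pi * Complex.I * (u.val : ℂ) * (v.val : ℂ) / N) = psi N (u * v) := by
  have h : u * v = (((u.val * v.val : ℕ) : ℤ) : ZMod N) := by
    push_cast
    rw [val_cast', val_cast']
  rw [h, psi_intCast, psiZ]
  congr 1
  push_cast
  ring

lemma psi_neg_val_val (N : ℕ) [NeZero N] (u v : ZMod N) :
    Complex.exp (-2 * Real.pi * Complex.I * (u.val : ℂ) * (v.val : ℂ) / N) = psi N (-(u * v)) := by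
  have h : -(u * v) = ((-(u.val * v.val : ℕ) : ℤ) : ZMod N) := by
    push_cast
    rw [val_cast', val_cast']
  rw [h, psi_intCast, psiZ]
  congr 1
  push_cast
  ring


lemma dft_eq (N : ℕ) [NeZero N] (f : ZMod N → ℂ) (k : ZMod N) :
    dft N f k = (((N : ℝ) ^ (-(1/2 : ℝ)) : ℝ) : ℂ) * ∑ x : ZMod N, f x * psi N (-(k * x)) := by
  rw [dft]
  congr 1
  exact Finset.sum_congr rfl fun x _ => by rw [psi_neg_val_val]

lemma sum_eq_coset (N : ℕ) [NeZero N] (H : AddSubgroup (ZMod N)) [DecidablePred (· ∈ H)]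
    (a : ZMod N) (g : ZMod N → ℂ) (hg : ∀ x, x - a ∉ H → g x = 0) :
    ∑ x : ZMod N, g x = ∑ h : H, g (a + h) := by
  classical
  have hinj : ∀ h₁ ∈ (Finset.univ : Finset H), ∀ h₂ ∈ (Finset.univ : Finset H),
      (fun h : H => a + (h : ZMod N)) h₁ = (fun h : H => a + (h : ZMod N)) h₂ → h₁ = h₂ := by
    intro h₁ _ h₂ _ hh
    exact Subtype.ext (add_left_cancel hh)
  rw [show (∑ h : H, g (a + h)) = ∑ h : H, g ((fun h : H => a + (h : ZMod N)) h) from rfl,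
    ← Finset.sum_image hinj]
  apply (Finset.sum_subset (Finset.subset_univ _) _).symm
  intro x _ hx
  apply hg
  intro hmem
  exact hx (Finset.mem_image.mpr ⟨⟨x - a, hmem⟩, Finset.mem_univ _, by ring⟩)

lemma subgroup_char_sum (N : ℕ) [NeZero N] (H : AddSubgroup (ZMod N)) [DecidablePred (· ∈ H)]
    (t : ZMod N) (h0 : ZMod N) (hh0 : h0 ∈ H) (hne : psi N (t * h0) ≠ 1) :
    ∑ h : H, psi N (t * h) = 0 := by
  have key : psi N (t * h0) * ∑ h : H, psi N (t * h) = ∑ h : H, psi N (t * h) := by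
    rw [Finset.mul_sum]
    exact Fintype.sum_equiv (Equiv.addLeft (⟨h0, hh0⟩ : H)) _ _ (fun h => by
      simp only [Equiv.coe_addLeft, AddSubgroup.coe_add]
      rw [show t * (h0 + (h : ZMod N)) = t * h0 + t * h by ring, psi_add])
  have h2 : (psi N (t * h0) - 1) * ∑ h : H, psi N (t * h) = 0 := by
    linear_combination key
  rcases mul_eq_zero.mp h2 with h3 | h3
  · exact absurd (by linear_combination h3) hne
  · exact h3

lemma full_char_sum (N : ℕ) [NeZero N] (t : ZMod N) (ht : t ≠ 0) :
    ∑ k : ZMod N, psi N (k * t) = 0 := by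
  have hne : psi N t ≠ 1 := fun h => ht ((psi_eq_one_iff N t).mp h)
  have key : psi N t * ∑ k : ZMod N, psi N (k * t) = ∑ k : ZMod N, psi N (k * t) := by
    rw [Finset.mul_sum]
    exact Fintype.sum_equiv (Equiv.addLeft (1 : ZMod N)) _ _ (fun k => by
      simp only [Equiv.coe_addLeft]
      rw [show (1 + k) * t = t + k * t by ring, psi_add])
  have h2 : (psi N t - 1) * ∑ k : ZMod N, psi N (k * t) = 0 := by
    linear_combination key
  rcases mul_eq_zero.mp h2 with h3 | h3
  · exact absurd (by linear_combination h3) hne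
  · exact h3

lemma orth (N : ℕ) [NeZero N] (t : ZMod N) [Decidable (t = 0)] :
    ∑ k : ZMod N, psi N (k * t) = if t = 0 then (N : ℂ) else 0 := by
  split_ifs with h
  · subst h
    simp [psi_zero, ZMod.card]
  · exact full_char_sum N t h

lemma dft_inversion (N : ℕ) [NeZero N] (g : ZMod N → ℂ) (y : ZMod N) :
    ∑ k : ZMod N, dft N g k * psi N (k * y) =
      (((N : ℝ) ^ (-(1/2 : ℝ)) : ℝ) : ℂ) * N * g y := by
  classical
  simp only [dft_eq, Finset.sum_mul, mul_assoc]
  rw [← Finset.mul_sum]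
  congr 1
  calc ∑ k : ZMod N, ∑ x : ZMod N, g x * (psi N (-(k * x)) * psi N (k * y))
      = ∑ x : ZMod N, ∑ k : ZMod N, g x * psi N (k * (y - x)) := by
        rw [Finset.sum_comm]
        refine Finset.sum_congr rfl fun x _ => Finset.sum_congr rfl fun k _ => ?_
        rw [← psi_add, show -(k * x) + k * y = k * (y - x) by ring]
    _ = ∑ x : ZMod N, g x * (if y - x = 0 then (N : ℂ) else 0) := by
        refine Finset.sum_congr rfl fun x _ => ?_
        rw [← Finset.mul_sum, orth]
    _ = (N : ℂ) * g y := by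
        rw [Finset.sum_eq_single y]
        · rw [sub_self, if_pos rfl]; ring
        · intro x _ hxy
          rw [if_neg (fun h => hxy (by linear_combination -h)), mul_zero]
        · intro h
          exact absurd (Finset.mem_univ y) h

/-- Hardy's uncertainty principle on ZMod N: if w is a bi-shift of a
biprojection (a nonzero multiple of a modulated translate of a subgroup
indicator function), |f| ≤ C |w| and |𝓕 f| ≤ C′ |𝓕 w|, then f is a scalar
multiple of w. -/
theorem hardy_uncertainty (N : ℕ) [NeZero N] (H : AddSubgroup (ZMod N))
    (a b : ZMod N) (c : ℂ) (hc : c ≠ 0) (w f : ZMod N → ℂ)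
    (hw : ∀ x : ZMod N,
      (x - a ∈ H →
        w x = c * Complex.exp
          (2 * Real.pi * Complex.I * (b.val : ℂ) * (x.val : ℂ) / (N : ℂ))) ∧
      (x - a ∉ H → w x = 0))
    (C C' : ℝ) (hC : 0 < C) (hC' : 0 < C')
    (hf : ∀ x : ZMod N, ‖f x‖ ≤ C * ‖w x‖)
    (hfF : ∀ k : ZMod N, ‖dft N f k‖ ≤ C' * ‖dft N w k‖) :
    ∃ l : ℂ, f = fun x => l * w x := by
  classical
  set ν : ℂ := (((N : ℝ) ^ (-(1/2 : ℝ)) : ℝ) : ℂ) with hν_def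
  have hNpos : (0:ℝ) < N := by
    exact_mod_cast Nat.pos_of_ne_zero (NeZero.ne N)
  have hν : ν ≠ 0 :=
    Complex.ofReal_ne_zero.mpr (ne_of_gt (Real.rpow_pos_of_pos hNpos _))
  have hw1 : ∀ x : ZMod N, x - a ∈ H → w x = c * psi N (b * x) := fun x hx => by
    rw [(hw x).1 hx, psi_val_val]
  have hw2 : ∀ x : ZMod N, x - a ∉ H → w x = 0 := fun x => (hw x).2
  have hf0 : ∀ x : ZMod N, x - a ∉ H → f x = 0 := by
    intro x hx
    have h1 := hf x
    rw [hw2 x hx, norm_zero, mul_zero] at h1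
    exact norm_eq_zero.mp (le_antisymm h1 (norm_nonneg _))
  have hwb : dft N w b = ν * ((Fintype.card H : ℂ) * c) := by
    rw [dft_eq]
    congr 1
    rw [sum_eq_coset N H a _ (fun x hx => by rw [hw2 x hx, zero_mul])]
    have hterm : ∀ h : H, w (a + h) * psi N (-(b * (a + h))) = c := by
      intro h
      rw [hw1 (a + h) (by simpa using h.property), mul_assoc, ← psi_add,
        add_neg_cancel, psi_zero, mul_one]
    rw [Finset.sum_congr rfl (fun h _ => hterm h), Finset.sum_const, Finset.card_univ,
      nsmul_eq_mul]
  have hcard : (Fintype.card H : ℂ) ≠ 0 := Nat.cast_ne_zero.mpr Fintype.card_ne_zero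
  have hwb0 : dft N w b ≠ 0 := by
    rw [hwb]; exact mul_ne_zero hν (mul_ne_zero hcard hc)
  set l : ℂ := dft N f b / dft N w b with hl
  refine ⟨l, ?_⟩
  have key : ∀ k, dft N f k = l * dft N w k := by
    intro k
    by_cases hk : ∀ h ∈ H, psi N ((b - k) * h) = 1
    · have shift : ∀ g : ZMod N → ℂ, (∀ x, x - a ∉ H → g x = 0) →
          dft N g k = psi N (-((k - b) * a)) * dft N g b := by
        intro g hg
        rw [dft_eq, dft_eq]
        calc ν * ∑ x : ZMod N, g x * psi N (-(k * x))
            = ν * ∑ x : ZMod N, psi N (-((k - b) * a)) * (g x * psi N (-(b * x))) := by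
              congr 1
              refine Finset.sum_congr rfl fun x _ => ?_
              by_cases hx : x - a ∈ H
              · rw [show -(k * x) = -((k - b) * a) + (-(b * x) + (b - k) * (x - a)) by ring,
                  psi_add, psi_add, hk _ hx, mul_one]
                ring
              · rw [hg x hx]; ring
          _ = psi N (-((k - b) * a)) * (ν * ∑ x : ZMod N, g x * psi N (-(b * x))) := by
              rw [← Finset.mul_sum]; ring
      rw [shift f hf0, shift w hw2, hl]
      field_simp
    · push_neg at hk
      obtain ⟨h0, hh0, hne⟩ := hk
      have hwk : dft N w k = 0 := by
        rw [dft_eq]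
        rw [sum_eq_coset N H a _ (fun x hx => by rw [hw2 x hx, zero_mul])]
        have hterm : ∀ h : H, w (a + h) * psi N (-(k * (a + h))) =
            c * psi N ((b - k) * a) * psi N ((b - k) * h) := by
          intro h
          rw [hw1 (a + h) (by simpa using h.property), mul_assoc, ← psi_add,
            show b * (a + (h : ZMod N)) + -(k * (a + (h : ZMod N))) =
              (b - k) * a + (b - k) * h by ring, psi_add, ← mul_assoc]
        rw [Finset.sum_congr rfl (fun h _ => hterm h), ← Finset.mul_sum,
          subgroup_char_sum N H _ h0 hh0 hne, mul_zero, mul_zero]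
      have h1 := hfF k
      rw [hwk, norm_zero, mul_zero] at h1
      rw [norm_eq_zero.mp (le_antisymm h1 (norm_nonneg _)), hwk, mul_zero]
  funext y
  have h1 := dft_inversion N f y
  have h2 := dft_inversion N w y
  have h3 : ∑ k : ZMod N, dft N f k * psi N (k * y) =
      l * ∑ k : ZMod N, dft N w k * psi N (k * y) := by
    rw [Finset.mul_sum]
    exact Finset.sum_congr rfl fun k _ => by rw [key k]; ring
  rw [h1, h2] at h3
  have hNne : (N : ℂ) ≠ 0 := Nat.cast_ne_zero.mpr (NeZero.ne N)
  have h4 : ν * (N : ℂ) * f y = ν * (N : ℂ) * (l * w y) := by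
    linear_combination h3
  exact mul_left_cancel₀ (mul_ne_zero hν hNne) h4
end
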